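/- Flat distance for one Dirac against a Dirac combination (Proposition of the paper): Let c > 0, let x_0, x_1, …, x_n ∈ R^d with distances d_i = |x_0 − x_i| ordered increasingly, let l ∈ {0,…,n} be such that d_i ≤ 2 for i ≤ l and d_i > 2 for i > l, and let b_1,…,b_n > 0. Set I* = max{ I ∈ {0,…,l} : Σ_{i=1}^I b_i ≤ c }. Then for μ = c δ_{x_0} and ν = Σ_{i=1}^n b_i δ_{x_i}, ρ_F(μ,ν) = Σ_{i=1}^{I*} b_i d_i + ( min{c, Σ_{i=1}^l b_i} − Σ_{i=1}^{I*} b_i ) d_{I*+1} + | c − Σ_{i=1}^l b_i | + Σ_{i=l+1}^n b_i. -/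

import Mathlib

open MeasureTheory

noncomputable def flatDist {d : ℕ} (μ ν : Measure (EuclideanSpace ℝ (Fin d))) : ℝ :=
  sSup { r : ℝ | ∃ f : EuclideanSpace ℝ (Fin d) → ℝ,
    (∀ x, |f x| ≤ 1) ∧ LipschitzWith 1 f ∧
    r = ∫ x, f x ∂μ - ∫ x, f x ∂ν }

/-- Prop. (general Dirac formula), with 0-based indexing: the support points are
`x 0, …, x (n-1)`, `dd i` is the distance from `x₀` to `x i` (ordered increasingly),
`l` counts the points within distance 2, and `Istar` is the greedy index `I*`. -/
theorem flatDist_dirac_vs_combination {d n : ℕ} (c : ℝ) (hc : 0 < c)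
    (x₀ : EuclideanSpace ℝ (Fin d)) (x : Fin n → EuclideanSpace ℝ (Fin d))
    (dd bb : ℕ → ℝ)
    (hdd : ∀ i : Fin n, dd i = dist x₀ (x i))
    (hmono : ∀ i j : Fin n, (i : ℕ) ≤ j → dd i ≤ dd j)
    (hb : ∀ i : Fin n, 0 < bb i)
    (l : ℕ) (hln : l ≤ n)
    (hl₁ : ∀ i : Fin n, (i : ℕ) < l → dd i ≤ 2)
    (hl₂ : ∀ i : Fin n, l ≤ (i : ℕ) → 2 < dd i)
    (Istar : ℕ) (hIl : Istar ≤ l)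
    (hIle : ∑ i ∈ Finset.range Istar, bb i ≤ c)
    (hImax : ∀ I, I ≤ l → ∑ i ∈ Finset.range I, bb i ≤ c → I ≤ Istar) :
    flatDist (ENNReal.ofReal c • Measure.dirac x₀)
        (∑ i : Fin n, ENNReal.ofReal (bb (i : ℕ)) • Measure.dirac (x i)) =
      ∑ i ∈ Finset.range Istar, bb i * dd i +
        (min c (∑ i ∈ Finset.range l, bb i) - ∑ i ∈ Finset.range Istar, bb i) * dd Istar +
        |c - ∑ i ∈ Finset.range l, bb i| + ∑ i ∈ Finset.Ico l n, bb i := by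
  classical
  have hbn : ∀ i : Fin n, (0:ℝ) ≤ bb i := fun i => (hb i).le
  -- evaluation of the integral expression
  have hval : ∀ f : EuclideanSpace ℝ (Fin d) → ℝ, (∀ y, |f y| ≤ 1) → LipschitzWith 1 f →
      ((∫ y, f y ∂(ENNReal.ofReal c • Measure.dirac x₀)) -
        ∫ y, f y ∂(∑ i : Fin n, ENNReal.ofReal (bb (i:ℕ)) • Measure.dirac (x i)))
        = c * f x₀ - ∑ i : Fin n, bb (i:ℕ) * f (x i) := by
    intro f hb1 hf
    have hint : ∀ i : Fin n, Integrable f (ENNReal.ofReal (bb (i:ℕ)) • Measure.dirac (x i)) := by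
      intro i
      refine Integrable.smul_measure ?_ ENNReal.ofReal_ne_top
      refine ⟨hf.continuous.measurable.aestronglyMeasurable,
        HasFiniteIntegral.of_bounded (C := 1) ?_⟩
      filter_upwards with y using by simpa [Real.norm_eq_abs] using hb1 y
    rw [integral_smul_measure, integral_dirac, ENNReal.toReal_ofReal hc.le, smul_eq_mul]
    rw [integral_finset_sum_measure (fun i _ => hint i)]
    congr 1
    refine Finset.sum_congr rfl fun i _ => ?_
    rw [integral_smul_measure, integral_dirac, ENNReal.toReal_ofReal (hbn i), smul_eq_mul]
  -- conversion: Fin-sum to range-sum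
  have hfin : ∀ f : EuclideanSpace ℝ (Fin d) → ℝ,
      ∑ i : Fin n, bb (i:ℕ) * f (x i)
        = ∑ i ∈ Finset.range n, (if h : i < n then bb i * f (x ⟨i, h⟩) else 0) := by
    intro f
    rw [← Fin.sum_univ_eq_sum_range (fun i => if h : i < n then bb i * f (x ⟨i, h⟩) else 0) n]
    exact Finset.sum_congr rfl fun i _ => by rw [dif_pos i.isLt]
  have hdn : ∀ i : Fin n, (0:ℝ) ≤ dd i := fun i => (hdd i) ▸ dist_nonneg
  set A := ∑ i ∈ Finset.range Istar, bb i with hA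
  set Sl := ∑ i ∈ Finset.range l, bb i with hSl
  set T := ∑ i ∈ Finset.Ico l n, bb i with hT
  set D := ∑ i ∈ Finset.range Istar, bb i * dd i with hD
  -- the Lipschitz bound
  have hlip : ∀ f : EuclideanSpace ℝ (Fin d) → ℝ, LipschitzWith 1 f →
      ∀ i : Fin n, f x₀ - f (x i) ≤ dd i := by
    intro f hf i
    have h1 := hf.dist_le_mul x₀ (x i)
    rw [Real.dist_eq, NNReal.coe_one, one_mul, ← hdd i] at h1
    exact (le_abs_self _).trans h1
  -- auxiliary: properties of the optimizer candidates
  have haux : ∀ t : ℝ, -1 ≤ t → t ≤ 1 →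
      (∀ y, |max (-1) (t - dist y x₀)| ≤ 1) ∧
      LipschitzWith 1 (fun y => max (-1) (t - dist y x₀)) ∧
      max (-1) (t - dist x₀ x₀) = t := by
    intro t ht1 ht2
    refine ⟨?_, ?_, ?_⟩
    · intro y
      rw [abs_le]
      refine ⟨le_max_left _ _, max_le (by norm_num) ?_⟩
      have := dist_nonneg (x := y) (y := x₀)
      linarith
    · refine LipschitzWith.mk_one fun a b => ?_
      rw [Real.dist_eq]
      calc |max (-1) (t - dist a x₀) - max (-1) (t - dist b x₀)|
          ≤ |(t - dist a x₀) - (t - dist b x₀)| := by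
            simpa [max_comm] using
              abs_max_sub_max_le_abs (t - dist a x₀) (t - dist b x₀) (-1)
        _ = |dist a x₀ - dist b x₀| := by
            rw [show (t - dist a x₀) - (t - dist b x₀) = -(dist a x₀ - dist b x₀) by ring,
              abs_neg]
        _ ≤ dist a b := abs_dist_sub_le a b x₀
    · rw [dist_self, sub_zero]
      exact max_eq_right ht1
  refine IsGreatest.csSup_eq ⟨?_, ?_⟩
  · -- membership: the supremum is attained
    rcases le_or_gt Sl c with hcase | hcase
    · -- plenty of mass: Istar = l, optimizer is max (-1) (1 - dist y x₀)
      have hIeq : Istar = l := le_antisymm hIl (hImax l le_rfl hcase)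
      subst hIeq
      have hAS : A = Sl := by rw [hA, hSl]
      obtain ⟨hp1, hp2, hp3⟩ := haux 1 (by norm_num) le_rfl
      refine ⟨fun y => max (-1) (1 - dist y x₀), hp1, hp2, ?_⟩
      have hfin' := hfin fun y => max (-1) (1 - dist y x₀)
      beta_reduce at hfin'
      rw [hval _ hp1 hp2, hfin']
      have hnearv : ∑ i ∈ Finset.range Istar,
          (if h : i < n then bb i * max (-1) (1 - dist (x ⟨i, h⟩) x₀) else 0)
          = A - D := by
        rw [hA, hD, ← Finset.sum_sub_distrib]
        refine Finset.sum_congr rfl fun i hi => ?_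
        have hi'' : i < Istar := Finset.mem_range.mp hi
        have hi' : i < n := lt_of_lt_of_le hi'' hln
        have hddc : dist (x ⟨i, hi'⟩) x₀ = dd i := by
          rw [dist_comm]; exact (hdd ⟨i, hi'⟩).symm
        have hle2 : dd i ≤ 2 := hl₁ ⟨i, hi'⟩ hi''
        rw [dif_pos hi', hddc, max_eq_right (by linarith : (-1:ℝ) ≤ 1 - dd i)]
        ring
      have hfarv : ∑ i ∈ Finset.Ico Istar n,
          (if h : i < n then bb i * max (-1) (1 - dist (x ⟨i, h⟩) x₀) else 0)
          = -T := by
        rw [hT, ← Finset.sum_neg_distrib]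
        refine Finset.sum_congr rfl fun i hi => ?_
        obtain ⟨hil, hi'⟩ := Finset.mem_Ico.mp hi
        have hddc : dist (x ⟨i, hi'⟩) x₀ = dd i := by
          rw [dist_comm]; exact (hdd ⟨i, hi'⟩).symm
        have hgt2 : 2 < dd i := hl₂ ⟨i, hi'⟩ hil
        rw [dif_pos hi', hddc, max_eq_left (by linarith : 1 - dd i ≤ (-1:ℝ))]
        ring
      rw [← Finset.sum_range_add_sum_Ico _ hln, hnearv, hfarv, hp3,
        min_eq_right hcase, abs_of_nonneg (by linarith : (0:ℝ) ≤ c - Sl)]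
      have hz : (Sl - A) * dd Istar = 0 := by rw [hAS, sub_self, zero_mul]
      linarith
    · -- not enough mass: Istar < l, optimizer is max (-1) (dd Istar - 1 - dist y x₀)
      have hIlt : Istar < l := by
        rcases lt_or_eq_of_le hIl with h | h
        · exact h
        · exfalso; rw [hA, h] at hIle; rw [hSl] at hcase; linarith
      have hIn' : Istar < n := hIlt.trans_le hln
      have hdI0 : (0:ℝ) ≤ dd Istar := hdn ⟨Istar, hIn'⟩
      have hdI2 : dd Istar ≤ 2 := hl₁ ⟨Istar, hIn'⟩ hIlt
      obtain ⟨hp1, hp2, hp3⟩ := haux (dd Istar - 1) (by linarith) (by linarith)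
      refine ⟨fun y => max (-1) (dd Istar - 1 - dist y x₀), hp1, hp2, ?_⟩
      have hfin' := hfin fun y => max (-1) (dd Istar - 1 - dist y x₀)
      beta_reduce at hfin'
      rw [hval _ hp1 hp2, hfin']
      have hnearv : ∑ i ∈ Finset.range Istar,
          (if h : i < n then bb i * max (-1) (dd Istar - 1 - dist (x ⟨i, h⟩) x₀) else 0)
          = A * (dd Istar - 1) - D := by
        rw [hA, hD, Finset.sum_mul, ← Finset.sum_sub_distrib]
        refine Finset.sum_congr rfl fun i hi => ?_
        have hi'' : i < Istar := Finset.mem_range.mp hi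
        have hi' : i < n := lt_of_lt_of_le hi'' (hIlt.trans_le hln).le
        have hddc : dist (x ⟨i, hi'⟩) x₀ = dd i := by
          rw [dist_comm]; exact (hdd ⟨i, hi'⟩).symm
        have hle : dd i ≤ dd Istar := hmono ⟨i, hi'⟩ ⟨Istar, hIn'⟩ hi''.le
        have hd0 : (0:ℝ) ≤ dd i := hdn ⟨i, hi'⟩
        rw [dif_pos hi', hddc,
          max_eq_right (by linarith : (-1:ℝ) ≤ dd Istar - 1 - dd i)]
        ring
      have hfarv : ∑ i ∈ Finset.Ico Istar n,
          (if h : i < n then bb i * max (-1) (dd Istar - 1 - dist (x ⟨i, h⟩) x₀) else 0)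
          = -((Sl - A) + T) := by
        have hsum : ∑ i ∈ Finset.Ico Istar n, bb i = (Sl - A) + T := by
          have e1 := Finset.sum_range_add_sum_Ico bb hIl
          have e2 := Finset.sum_Ico_consecutive bb hIl hln
          rw [hSl, hA, hT] at *
          linarith
        rw [← hsum, ← Finset.sum_neg_distrib]
        refine Finset.sum_congr rfl fun i hi => ?_
        obtain ⟨hil, hi'⟩ := Finset.mem_Ico.mp hi
        have hddc : dist (x ⟨i, hi'⟩) x₀ = dd i := by
          rw [dist_comm]; exact (hdd ⟨i, hi'⟩).symm
        have hge : dd Istar ≤ dd i := hmono ⟨Istar, hIn'⟩ ⟨i, hi'⟩ hil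
        rw [dif_pos hi', hddc,
          max_eq_left (by linarith : dd Istar - 1 - dd i ≤ (-1:ℝ))]
        ring
      rw [← Finset.sum_range_add_sum_Ico _ hIn'.le, hnearv, hfarv, hp3,
        min_eq_left hcase.le, abs_of_neg (by linarith : c - Sl < 0)]
      ring
  · -- upper bound
    rintro r ⟨f, hb1, hf, rfl⟩
    rw [hval f hb1 hf, hfin f]
    set G : ℕ → ℝ := fun i => if h : i < n then bb i * f (x ⟨i, h⟩) else 0 with hG
    have hfx0 := abs_le.mp (hb1 x₀)
    have hs1 : ∑ i ∈ Finset.range n, G i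
        = ∑ i ∈ Finset.range l, G i + ∑ i ∈ Finset.Ico l n, G i :=
      (Finset.sum_range_add_sum_Ico G hln).symm
    have hs2 : ∑ i ∈ Finset.range l, G i
        = ∑ i ∈ Finset.range Istar, G i + ∑ i ∈ Finset.Ico Istar l, G i :=
      (Finset.sum_range_add_sum_Ico G hIl).symm
    have hb1' : ∀ i, i < n → -bb i ≤ G i := by
      intro i hi
      have h2 : -1 ≤ f (x ⟨i, hi⟩) := (abs_le.mp (hb1 (x ⟨i, hi⟩))).1
      have h3 : (0:ℝ) ≤ bb i := hbn ⟨i, hi⟩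
      simp only [hG, dif_pos hi]
      nlinarith
    have hfar : -T ≤ ∑ i ∈ Finset.Ico l n, G i := by
      rw [hT, ← Finset.sum_neg_distrib]
      exact Finset.sum_le_sum fun i hi => hb1' i (Finset.mem_Ico.mp hi).2
    have hnear : A * f x₀ - D ≤ ∑ i ∈ Finset.range Istar, G i := by
      have hstep : ∑ i ∈ Finset.range Istar, (bb i * f x₀ - bb i * dd i)
          ≤ ∑ i ∈ Finset.range Istar, G i := by
        refine Finset.sum_le_sum fun i hi => ?_
        have hi' : i < n := lt_of_lt_of_le (Finset.mem_range.mp hi) (hIl.trans hln)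
        have h2 : f x₀ - f (x ⟨i, hi'⟩) ≤ dd i := hlip f hf ⟨i, hi'⟩
        have h3 : (0:ℝ) ≤ bb i := hbn ⟨i, hi'⟩
        simp only [hG, dif_pos hi']
        nlinarith
      calc A * f x₀ - D = ∑ i ∈ Finset.range Istar, (bb i * f x₀ - bb i * dd i) := by
            rw [Finset.sum_sub_distrib, ← Finset.sum_mul, hA, hD]
        _ ≤ _ := hstep
    rcases le_or_gt Sl c with hcase | hcase
    · -- plenty of mass: Istar = l
      have hIeq : Istar = l := le_antisymm hIl (hImax l le_rfl hcase)
      subst hIeq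
      have hAS : A = Sl := by rw [hA, hSl]
      rw [min_eq_right hcase, abs_of_nonneg (by linarith : (0:ℝ) ≤ c - Sl)]
      have hz : (Sl - A) * dd Istar = 0 := by rw [hAS, sub_self, zero_mul]
      have hprod : (c - A) * f x₀ ≤ (c - A) * 1 :=
        mul_le_mul_of_nonneg_left hfx0.2 (by linarith)
      nlinarith [hs1, hnear, hfar]
    · -- not enough mass: Istar < l
      have hIlt : Istar < l := by
        rcases lt_or_eq_of_le hIl with h | h
        · exact h
        · exfalso; rw [hA, h] at hIle; rw [hSl] at hcase; linarith
      have hIn' : Istar < n := hIlt.trans_le hln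
      have h2 : c < ∑ i ∈ Finset.range (Istar + 1), bb i := by
        by_contra h
        have := hImax (Istar + 1) hIlt (not_lt.mp h)
        omega
      rw [Finset.sum_range_succ, ← hA] at h2
      have hGI : (c - A) * f x₀ - (c - A) * dd Istar - (bb Istar - (c - A)) ≤ G Istar := by
        have hh1 : f x₀ - f (x ⟨Istar, hIn'⟩) ≤ dd Istar := hlip f hf ⟨Istar, hIn'⟩
        have hh2 : -1 ≤ f (x ⟨Istar, hIn'⟩) := (abs_le.mp (hb1 _)).1
        have hh3 : (0:ℝ) ≤ bb Istar := hbn ⟨Istar, hIn'⟩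
        simp only [hG, dif_pos hIn']
        nlinarith [mul_nonneg (sub_nonneg.mpr hIle)
            (by linarith : (0:ℝ) ≤ f (x ⟨Istar, hIn'⟩) - f x₀ + dd Istar),
          mul_nonneg (by linarith : (0:ℝ) ≤ bb Istar - (c - A))
            (by linarith : (0:ℝ) ≤ f (x ⟨Istar, hIn'⟩) + 1)]
      have hs3 : ∑ i ∈ Finset.Ico Istar l, G i
          = G Istar + ∑ i ∈ Finset.Ico (Istar + 1) l, G i :=
        Finset.sum_eq_sum_Ico_succ_bot hIlt G
      have hmid : -(Sl - A - bb Istar) ≤ ∑ i ∈ Finset.Ico (Istar + 1) l, G i := by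
        have hsum : ∑ i ∈ Finset.Ico (Istar + 1) l, bb i = Sl - A - bb Istar := by
          have e1 := Finset.sum_range_add_sum_Ico bb hIl
          have e2 := Finset.sum_eq_sum_Ico_succ_bot hIlt bb
          rw [hSl, hA]; linarith
        rw [← hsum, ← Finset.sum_neg_distrib]
        exact Finset.sum_le_sum fun i hi =>
          hb1' i ((Finset.mem_Ico.mp hi).2.trans_le hln)
      rw [min_eq_left hcase.le, abs_of_neg (by linarith : c - Sl < 0)]
      nlinarith [hs1, hs2, hs3, hnear, hGI, hmid, hfar]
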